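/- Let v_1, v_2 be unit vectors in ℝ^n with ⟨v_1, v_2⟩ ≤ -1/(k-1) for real k > 2, let r be a vector of i.i.d. standard normals, and c > 0. Then P(⟨v_1, r⟩ ≥ c and ⟨v_2, r⟩ ≥ c) ≤ N(ac), where a = sqrt(2(k-1)/(k-2)) and N is the standard normal upper tail. -/

import Mathlib

open MeasureTheory ProbabilityTheory
open scoped RealInnerProductSpace
open Real
open scoped ENNReal NNReal

lemma gpdf_mul (a b : ℝ≥0) (ha : a ≠ 0) (hb : b ≠ 0) (z x : ℝ) :
    gaussianPDFReal 0 a x * gaussianPDFReal 0 b (z - x)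
      = gaussianPDFReal 0 (a + b) z * gaussianPDFReal ((a : ℝ) * z / (a + b)) (a * b / (a + b)) x := by
  have ha' : (0:ℝ) < a := lt_of_le_of_ne a.coe_nonneg (by exact_mod_cast ha.symm)
  have hb' : (0:ℝ) < b := lt_of_le_of_ne b.coe_nonneg (by exact_mod_cast hb.symm)
  have hab : (0:ℝ) < (a:ℝ) + b := by linarith
  simp only [gaussianPDFReal, NNReal.coe_add, NNReal.coe_div, NNReal.coe_mul, sub_zero]
  rw [show (√(2 * π * a))⁻¹ * rexp (-x ^ 2 / (2 * a)) * ((√(2 * π * b))⁻¹ * rexp (-(z - x) ^ 2 / (2 * b)))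
      = ((√(2 * π * a))⁻¹ * (√(2 * π * b))⁻¹) * (rexp (-x ^ 2 / (2 * a)) * rexp (-(z - x) ^ 2 / (2 * b))) by ring]
  rw [show (√(2 * π * ((a:ℝ) + b)))⁻¹ * rexp (-z ^ 2 / (2 * ((a:ℝ) + b))) *
        ((√(2 * π * ((a:ℝ) * b / ((a:ℝ) + b))))⁻¹ * rexp (-(x - (a:ℝ) * z / ((a:ℝ) + b)) ^ 2 / (2 * ((a:ℝ) * b / ((a:ℝ) + b)))))
      = ((√(2 * π * ((a:ℝ) + b)))⁻¹ * (√(2 * π * ((a:ℝ) * b / ((a:ℝ) + b))))⁻¹) *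
        (rexp (-z ^ 2 / (2 * ((a:ℝ) + b))) * rexp (-(x - (a:ℝ) * z / ((a:ℝ) + b)) ^ 2 / (2 * ((a:ℝ) * b / ((a:ℝ) + b))))) by ring]
  congr 1
  · rw [← mul_inv, ← mul_inv, ← Real.sqrt_mul (by positivity), ← Real.sqrt_mul (by positivity)]
    congr 1
    field_simp
  · rw [← Real.exp_add, ← Real.exp_add]
    congr 1
    field_simp
    ring

lemma gpdf_conv (a b : ℝ≥0) (ha : a ≠ 0) (hb : b ≠ 0) (z : ℝ) :
    ∫⁻ x, gaussianPDF 0 a x * gaussianPDF 0 b (z - x) = gaussianPDF 0 (a + b) z := by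
  have hw : (a * b / (a + b) : ℝ≥0) ≠ 0 := by
    simp [div_eq_zero_iff, mul_eq_zero, ha, hb]
  have key : ∀ x, gaussianPDF 0 a x * gaussianPDF 0 b (z - x)
      = ENNReal.ofReal (gaussianPDFReal 0 (a + b) z) *
          ENNReal.ofReal (gaussianPDFReal ((a : ℝ) * z / (a + b)) (a * b / (a + b)) x) := by
    intro x
    rw [gaussianPDF, gaussianPDF, ← ENNReal.ofReal_mul (gaussianPDFReal_nonneg _ _ _),
      ← ENNReal.ofReal_mul (gaussianPDFReal_nonneg _ _ _)]
    congr 1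
    exact gpdf_mul a b ha hb z x
  simp_rw [key]
  rw [lintegral_const_mul' _ _ ENNReal.ofReal_ne_top,
    lintegral_gaussianPDFReal_eq_one _ hw, mul_one]
  rfl

lemma gaussian_conv (a b : ℝ≥0) :
    Measure.conv (gaussianReal 0 a) (gaussianReal 0 b) = gaussianReal 0 (a + b) := by
  by_cases ha : a = 0
  · subst ha
    rw [gaussianReal_zero_var, zero_add]
    exact Measure.dirac_zero_conv _
  by_cases hb : b = 0
  · subst hb
    rw [gaussianReal_zero_var, add_zero]
    exact Measure.conv_dirac_zero _
  have hab : a + b ≠ 0 := by simp [ha]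
  rw [gaussianReal_of_var_ne_zero _ ha, gaussianReal_of_var_ne_zero _ hb,
    gaussianReal_of_var_ne_zero _ hab]
  ext s hs
  rw [Measure.conv, Measure.map_apply (f := fun p : ℝ × ℝ => p.1 + p.2) (measurable_fst.add measurable_snd) hs,
    Measure.prod_apply (s := (fun p : ℝ × ℝ => p.1 + p.2) ⁻¹' s) ((measurable_fst.add measurable_snd) hs)]
  have step1 : ∀ x : ℝ, (volume.withDensity (gaussianPDF 0 b))
      (Prod.mk x ⁻¹' ((fun p : ℝ × ℝ => p.1 + p.2) ⁻¹' s))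
      = ∫⁻ z in s, gaussianPDF 0 b (z - x) := by
    intro x
    have hpre : Prod.mk x ⁻¹' ((fun p : ℝ × ℝ => p.1 + p.2) ⁻¹' s)
        = (fun y => x + y) ⁻¹' s := rfl
    rw [hpre, withDensity_apply _ ((measurable_const_add x) hs)]
    have hmap : (volume : Measure ℝ).map (fun y => x + y) = volume :=
      MeasureTheory.map_add_left_eq_self volume x
    have h2 := setLIntegral_map (μ := (volume : Measure ℝ))
      (f := fun z => gaussianPDF 0 b (z - x)) (g := fun y => x + y) hs
      ((measurable_gaussianPDF 0 b).comp (measurable_id.sub_const x))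
      (measurable_const_add x)
    rw [hmap] at h2
    rw [h2]
    simp
  simp_rw [step1]
  have hm : Measurable fun x => ∫⁻ z in s, gaussianPDF 0 b (z - x) :=
    Measurable.lintegral_prod_right
      ((measurable_gaussianPDF 0 b).comp (measurable_snd.sub measurable_fst))
  rw [lintegral_withDensity_eq_lintegral_mul _ (measurable_gaussianPDF 0 a) hm,
    withDensity_apply _ hs]
  simp_rw [Pi.mul_apply]
  have hpull : ∀ x : ℝ, gaussianPDF 0 a x * ∫⁻ z in s, gaussianPDF 0 b (z - x)
      = ∫⁻ z in s, gaussianPDF 0 a x * gaussianPDF 0 b (z - x) :=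
    fun x => (lintegral_const_mul' _ _ ENNReal.ofReal_ne_top).symm
  simp_rw [hpull]
  rw [lintegral_lintegral_swap]
  · refine setLIntegral_congr_fun hs (fun z _ => ?_)
    exact gpdf_conv a b ha hb z
  · exact (((measurable_gaussianPDF 0 a).comp measurable_fst).mul
      ((measurable_gaussianPDF 0 b).comp (measurable_snd.sub measurable_fst))).aemeasurable

lemma indep_gaussian_add {Ω : Type*} [MeasurableSpace Ω] (μ : Measure Ω) [IsProbabilityMeasure μ]
    {X Y : Ω → ℝ} (hX : Measurable X) (hY : Measurable Y) (h : ProbabilityTheory.IndepFun X Y μ)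
    (a b : ℝ≥0) (hXd : μ.map X = gaussianReal 0 a) (hYd : μ.map Y = gaussianReal 0 b) :
    μ.map (fun ω => X ω + Y ω) = gaussianReal 0 (a + b) := by
  have hprod : μ.map (fun ω => (X ω, Y ω)) = (μ.map X).prod (μ.map Y) :=
    (ProbabilityTheory.indepFun_iff_map_prod_eq_prod_map_map hX.aemeasurable hY.aemeasurable).mp h
  have : μ.map (fun ω => X ω + Y ω)
      = Measure.map (fun p : ℝ × ℝ => p.1 + p.2) (μ.map (fun ω => (X ω, Y ω))) := by
    rw [Measure.map_map (g := fun p : ℝ × ℝ => p.1 + p.2) (measurable_fst.add measurable_snd) (hX.prodMk hY)]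
    rfl
  rw [this, hprod, hXd, hYd, ← Measure.conv, gaussian_conv]

lemma map_weighted_sum_gaussian {n : ℕ} {Ω : Type*} [MeasurableSpace Ω] (μ : Measure Ω)
    [IsProbabilityMeasure μ] (r : Fin n → Ω → ℝ) (hmeas : ∀ i, Measurable (r i))
    (hindep : ProbabilityTheory.iIndepFun r μ)
    (hdist : ∀ i, μ.map (r i) = gaussianReal 0 1) (w : Fin n → ℝ) (s : Finset (Fin n)) :
    μ.map (fun ω => ∑ i ∈ s, w i * r i ω)
      = gaussianReal 0 (∑ i ∈ s, (NNReal.mk (w i ^ 2) (sq_nonneg _))) := by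
  classical
  induction s using Finset.induction_on with
  | empty =>
      simp only [Finset.sum_empty]
      rw [gaussianReal_zero_var, Measure.map_const, measure_univ, one_smul]
  | @insert i s' hi ih =>
      have hwind : ProbabilityTheory.iIndepFun
          (fun j => fun ω => w j * r j ω) μ :=
        hindep.comp (fun j => fun x => w j * x) (fun j => measurable_const_mul (w j))
      have hind : ProbabilityTheory.IndepFun
          (fun ω => w i * r i ω) (∑ j ∈ s', fun ω => w j * r j ω) μ :=
        (hwind.indepFun_finset_sum_of_notMem (fun j => (hmeas j).const_mul (w j)) hi).symm
      have hsum_eq : (∑ j ∈ s', fun ω => w j * r j ω) = fun ω => ∑ j ∈ s', w j * r j ω := by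
        ext ω; simp
      rw [hsum_eq] at hind
      have hmapX : μ.map (fun ω => w i * r i ω) = gaussianReal 0 (NNReal.mk (w i ^ 2) (sq_nonneg _)) := by
        have : (fun ω => w i * r i ω) = (fun x => w i * x) ∘ r i := rfl
        rw [this, ← Measure.map_map (measurable_const_mul (w i)) (hmeas i), hdist i,
          gaussianReal_map_const_mul]
        simp
      have hms : Measurable fun ω => ∑ j ∈ s', w j * r j ω :=
        Finset.measurable_sum s' fun j _ => (hmeas j).const_mul (w j)
      have := indep_gaussian_add μ ((hmeas i).const_mul (w i)) hms hind
        (NNReal.mk (w i ^ 2) (sq_nonneg _)) (∑ j ∈ s', (NNReal.mk (w j ^ 2) (sq_nonneg _))) hmapX ih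
      rw [show (fun ω => ∑ j ∈ insert i s', w j * r j ω)
          = fun ω => w i * r i ω + ∑ j ∈ s', w j * r j ω from
          funext fun ω => Finset.sum_insert hi, Finset.sum_insert hi]
      exact this



theorem both_endpoints_captured_prob_le (n : ℕ) (k : ℝ) (hk : 2 < k)
    {Ω : Type*} [MeasurableSpace Ω] (μ : Measure Ω) [IsProbabilityMeasure μ]
    (r : Fin n → Ω → ℝ) (hmeas : ∀ i, Measurable (r i))
    (hindep : iIndepFun r μ)
    (hdist : ∀ i, μ.map (r i) = gaussianReal 0 1)
    (v₁ v₂ : EuclideanSpace ℝ (Fin n)) (h₁ : ‖v₁‖ = 1) (h₂ : ‖v₂‖ = 1)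
    (hinner : ⟪v₁, v₂⟫ ≤ -1 / (k - 1))
    (c : ℝ) (hc : 0 < c) :
    μ {ω | c ≤ ∑ i, v₁ i * r i ω ∧ c ≤ ∑ i, v₂ i * r i ω} ≤
      gaussianReal 0 1 (Set.Ici (Real.sqrt (2 * (k - 1) / (k - 2)) * c)) := by
  classical
  set w : Fin n → ℝ := fun i => v₁ i + v₂ i with hw
  set T : Ω → ℝ := fun ω => ∑ i, w i * r i ω with hT
  have hTmeas : Measurable T := Finset.measurable_sum _ fun i _ => (hmeas i).const_mul (w i)
  -- inclusion
  have hincl : {ω | c ≤ ∑ i, v₁ i * r i ω ∧ c ≤ ∑ i, v₂ i * r i ω} ⊆ T ⁻¹' Set.Ici (2 * c) := by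
    intro ω hω
    have : ∑ i, v₁ i * r i ω + ∑ i, v₂ i * r i ω = T ω := by
      rw [hT, ← Finset.sum_add_distrib]
      refine Finset.sum_congr rfl fun i _ => ?_
      rw [hw]; ring
    simp only [Set.mem_preimage, Set.mem_Ici, ← this]
    linarith [hω.1, hω.2]
  refine le_trans (measure_mono hincl) ?_
  -- law of T
  set σsq : ℝ≥0 := ∑ i, (NNReal.mk (w i ^ 2) (sq_nonneg _)) with hσsq
  have hTlaw : μ.map T = gaussianReal 0 σsq :=
    map_weighted_sum_gaussian μ r hmeas hindep hdist w Finset.univ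
  have hμT : μ (T ⁻¹' Set.Ici (2 * c)) = gaussianReal 0 σsq (Set.Ici (2 * c)) := by
    rw [← hTlaw, Measure.map_apply hTmeas measurableSet_Ici]
  rw [hμT]
  -- variance bound
  have hk1 : (0:ℝ) < k - 1 := by linarith
  have hk2 : (0:ℝ) < k - 2 := by linarith
  have hσcoe : (σsq : ℝ) = ‖v₁ + v₂‖ ^ 2 := by
    rw [hσsq, NNReal.coe_sum]
    rw [EuclideanSpace.norm_eq, Real.sq_sqrt (by positivity)]
    refine Finset.sum_congr rfl fun i _ => ?_
    simp [hw, sq_abs]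
  have hσle : (σsq : ℝ) ≤ 2 * (k - 2) / (k - 1) := by
    rw [hσcoe, norm_add_sq_real, h₁, h₂]
    have hinner' : ⟪v₁, v₂⟫ ≤ -(1 / (k-1)) := by rw [← neg_div]; exact hinner
    have heq : 2 * (k - 2) / (k - 1) = 2 - 2 * (1 / (k - 1)) := by field_simp; ring
    rw [heq]
    linarith
  by_cases hσ0 : σsq = 0
  · rw [hσ0, gaussianReal_zero_var, Measure.dirac_apply' _ measurableSet_Ici]
    have : (0:ℝ) ∉ Set.Ici (2 * c) := by simp; linarith
    simp [Set.indicator_of_notMem this]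
  · set σ : ℝ := Real.sqrt σsq with hσdef
    have hσpos : 0 < σ := Real.sqrt_pos.mpr (by exact_mod_cast pos_iff_ne_zero.mpr hσ0)
    have hvar : (NNReal.mk (σ ^ 2) (sq_nonneg _)) * 1 = σsq := by
      rw [mul_one]
      ext
      exact Real.sq_sqrt σsq.coe_nonneg
    have hmap : (gaussianReal 0 1).map (fun x => σ * x) = gaussianReal 0 σsq := by
      rw [gaussianReal_map_const_mul, mul_zero, hvar]
    rw [← hmap, Measure.map_apply (measurable_const_mul σ) measurableSet_Ici]
    have hpre : (fun x => σ * x) ⁻¹' Set.Ici (2 * c) = Set.Ici (2 * c / σ) := by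
      ext x
      simp only [Set.mem_preimage, Set.mem_Ici]
      rw [div_le_iff₀ hσpos, mul_comm]
      constructor <;> intro h <;> linarith [h]
    rw [hpre]
    refine measure_mono (Set.Ici_subset_Ici.mpr ?_)
    -- √(2(k-1)/(k-2)) * c ≤ 2c/σ
    have hA : (0:ℝ) ≤ 2 * (k - 1) / (k - 2) := by positivity
    have hprod : Real.sqrt (2 * (k - 1) / (k - 2)) * σ ≤ 2 := by
      have h1 : σ ≤ Real.sqrt (2 * (k - 2) / (k - 1)) := Real.sqrt_le_sqrt hσle
      calc Real.sqrt (2 * (k - 1) / (k - 2)) * σ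
          ≤ Real.sqrt (2 * (k - 1) / (k - 2)) * Real.sqrt (2 * (k - 2) / (k - 1)) := by
            exact mul_le_mul_of_nonneg_left h1 (Real.sqrt_nonneg _)
        _ = Real.sqrt (2 * (k - 1) / (k - 2) * (2 * (k - 2) / (k - 1))) :=
            (Real.sqrt_mul hA _).symm
        _ = 2 := by
            rw [show 2 * (k - 1) / (k - 2) * (2 * (k - 2) / (k - 1)) = 4 by
              field_simp; ring]
            rw [show (4:ℝ) = 2 ^ 2 by norm_num, Real.sqrt_sq (by norm_num)]
    rw [le_div_iff₀ hσpos]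
    nlinarith [Real.sqrt_nonneg (2 * (k - 1) / (k - 2))]
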